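/- arXiv:2004.10485 — 4 statements merged into one kernel-verified Lean document; each statement's English description precedes it below -/
import Mathlib

section
/- (Boxing lemma for characteristic functions) Let E ⊆ ℝ^d be a measurable set of finite measure contained in the union of a family ℬ of open balls B each satisfying |E∩B| ≤ |B|/2. Then there exists a family ℱ of balls F with |F∩E| = |F|/2 covering almost every point of E, such that each F ∈ ℱ is contained in some B ∈ ℬ. -/
open MeasureTheory Metric Set Filter
open scoped ENNReal Topology

lemma nontriv_euclid {d : ℕ} (hd : 1 ≤ d) : Nontrivial (EuclideanSpace ℝ (Fin d)) := by
  apply Module.nontrivial_of_finrank_pos (R := ℝ)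
  rw [finrank_euclideanSpace_fin]
  exact hd

lemma auxCont {d : ℕ} (hd : 1 ≤ d) (S : Set (EuclideanSpace ℝ (Fin d)))
    (hS : MeasurableSet S) (hfin : volume S < ⊤)
    {c : ℝ → EuclideanSpace ℝ (Fin d)} {r : ℝ → ℝ}
    (hc : Continuous c) (hr : Continuous r) :
    Continuous fun t => (volume (S ∩ ball (c t) (r t))).toReal := by
  haveI := nontriv_euclid hd
  set μ := volume.restrict S with hμ
  haveI : IsFiniteMeasure μ := ⟨by simpa [μ, Measure.restrict_apply_univ] using hfin⟩
  have key : ∀ t, volume (S ∩ ball (c t) (r t)) = μ (ball (c t) (r t)) := by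
    intro t
    rw [hμ, Measure.restrict_apply measurableSet_ball, inter_comm]
  simp_rw [key]
  rw [continuous_iff_continuousAt]
  intro t₀
  apply ContinuousAt.comp (g := ENNReal.toReal)
  · exact ENNReal.continuousAt_toReal (measure_ne_top μ _)
  rw [ContinuousAt, tendsto_iff_seq_tendsto]
  intro u hu
  have huc : Tendsto (fun n => c (u n)) atTop (𝓝 (c t₀)) := (hc.tendsto _).comp hu
  have hur : Tendsto (fun n => r (u n)) atTop (𝓝 (r t₀)) := (hr.tendsto _).comp hu
  have h1 : ∀ n, μ (ball (c (u n)) (r (u n))) = ∫⁻ z, (ball (c (u n)) (r (u n))).indicator 1 z ∂μ :=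
    fun n => (lintegral_indicator_one measurableSet_ball).symm
  have h2 : μ (ball (c t₀) (r t₀)) = ∫⁻ z, (ball (c t₀) (r t₀)).indicator 1 z ∂μ :=
    (lintegral_indicator_one measurableSet_ball).symm
  rw [h2]
  apply Tendsto.congr (fun n => (h1 n).symm)
  apply tendsto_lintegral_of_dominated_convergence (fun _ => 1)
  · exact fun n => (measurable_one.indicator measurableSet_ball)
  · intro n
    filter_upwards with z
    exact indicator_le_self' (fun _ _ => zero_le_one) z
  · simpa using (measure_ne_top μ univ)
  · have hsph : μ (sphere (c t₀) (r t₀)) = 0 := by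
      apply le_antisymm _ (by simp)
      calc μ (sphere (c t₀) (r t₀)) ≤ volume (sphere (c t₀) (r t₀)) :=
            Measure.restrict_le_self _
        _ = 0 := Measure.addHaar_sphere volume _ _
    filter_upwards [measure_eq_zero_iff_ae_notMem.mp hsph] with z hz
    have hne : dist z (c t₀) ≠ r t₀ := fun h => hz h
    rcases lt_or_gt_of_ne hne with h | h
    · have : ∀ᶠ n in atTop, z ∈ ball (c (u n)) (r (u n)) := by
        have : Tendsto (fun n => r (u n) - dist z (c (u n))) atTop (𝓝 (r t₀ - dist z (c t₀))) :=
          hur.sub (tendsto_const_nhds.dist huc)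
        filter_upwards [this.eventually (eventually_gt_nhds (by linarith : (0:ℝ) < r t₀ - dist z (c t₀)))] with n hn
        simpa [mem_ball] using by linarith
      apply Tendsto.congr' (f₁ := fun _ => 1)
      · filter_upwards [this] with n hn; simp [indicator_of_mem hn]
      · have : z ∈ ball (c t₀) (r t₀) := by simpa [mem_ball] using h
        simp [indicator_of_mem this]
    · have : ∀ᶠ n in atTop, z ∉ ball (c (u n)) (r (u n)) := by
        have : Tendsto (fun n => dist z (c (u n)) - r (u n)) atTop (𝓝 (dist z (c t₀) - r t₀)) :=
          (tendsto_const_nhds.dist huc).sub hur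
        filter_upwards [this.eventually (eventually_gt_nhds (by linarith : (0:ℝ) < dist z (c t₀) - r t₀))] with n hn
        simp only [mem_ball]; intro hb; linarith
      apply Tendsto.congr' (f₁ := fun _ => 0)
      · filter_upwards [this] with n hn; simp [indicator_of_notMem hn]
      · have : z ∉ ball (c t₀) (r t₀) := by simp [mem_ball]; linarith
        simp [indicator_of_notMem this]

lemma ball_eq_closedBall_vol {d : ℕ} (hd : 1 ≤ d) (S : Set (EuclideanSpace ℝ (Fin d)))
    (x : EuclideanSpace ℝ (Fin d)) (ρ : ℝ) :
    volume (S ∩ ball x ρ) = volume (S ∩ closedBall x ρ) := by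
  haveI := nontriv_euclid hd
  apply le_antisymm (measure_mono (inter_subset_inter_right _ ball_subset_closedBall))
  calc volume (S ∩ closedBall x ρ) ≤ volume ((S ∩ ball x ρ) ∪ sphere x ρ) := by
        apply measure_mono
        rw [← ball_union_sphere]
        intro z hz
        rcases hz.2 with h | h
        · exact Or.inl ⟨hz.1, h⟩
        · exact Or.inr h
    _ ≤ volume (S ∩ ball x ρ) + volume (sphere x ρ) := measure_union_le _ _
    _ = volume (S ∩ ball x ρ) := by rw [Measure.addHaar_sphere volume, add_zero]

lemma exists_half_ball {d : ℕ} (hd : 1 ≤ d) (E : Set (EuclideanSpace ℝ (Fin d)))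
    (hE : MeasurableSet E) (hEfin : volume E < ⊤)
    (x c : EuclideanSpace ℝ (Fin d)) (R : ℝ) (hx : x ∈ ball c R)
    (hhalfB : volume (E ∩ ball c R) ≤ volume (ball c R) / 2)
    (hdens : Tendsto (fun ρ => volume (E ∩ closedBall x ρ) / volume (closedBall x ρ))
      (𝓝[>] 0) (𝓝 1)) :
    ∃ y s, 0 < s ∧ x ∈ ball y s ∧ ball y s ⊆ ball c R ∧
      volume (ball y s ∩ E) = volume (ball y s) / 2 := by
  haveI := nontriv_euclid hd
  rw [mem_ball] at hx
  have hdxc : (0:ℝ) ≤ dist x c := dist_nonneg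
  have hR : 0 < R := lt_of_le_of_lt hdxc hx
  set ε : ℝ := (R - dist x c) / 2 with hε
  have hεpos : 0 < ε := by simp [hε]; linarith
  -- find small r with density > 1/2
  have h12 : (1/2 : ℝ≥0∞) < 1 := by norm_num
  have hev : ∀ᶠ ρ in 𝓝[>] (0:ℝ),
      (1/2 : ℝ≥0∞) < volume (E ∩ closedBall x ρ) / volume (closedBall x ρ) :=
    hdens.eventually (eventually_gt_nhds h12)
  have hIoc : Ioc (0:ℝ) ε ∈ 𝓝[>] (0:ℝ) := Ioc_mem_nhdsGT_of_mem ⟨le_refl _, hεpos⟩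
  obtain ⟨r, hr1, hr2⟩ := (hev.and hIoc).exists
  obtain ⟨hrpos, hrε⟩ := hr2
  -- turn into strict ineq with open ball
  have hb0 : volume (closedBall x r) ≠ 0 := (measure_closedBall_pos volume x hrpos).ne'
  have hbt : volume (closedBall x r) ≠ ⊤ := measure_closedBall_lt_top.ne
  have hball : volume (ball x r) = volume (closedBall x r) := by
    simpa using ball_eq_closedBall_vol hd univ x r
  have hstrict : volume (ball x r) / 2 < volume (E ∩ ball x r) := by
    have h' := (ENNReal.lt_div_iff_mul_lt (Or.inl hb0) (Or.inl hbt)).mp hr1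
    calc volume (ball x r) / 2 = 1/2 * volume (closedBall x r) := by
          rw [hball, div_eq_mul_inv, one_div, mul_comm]
      _ < volume (E ∩ closedBall x r) := h'
      _ = volume (E ∩ ball x r) := (ball_eq_closedBall_vol hd E x r).symm
  -- the moving ball
  set c' : ℝ → EuclideanSpace ℝ (Fin d) := fun t => x + t • (c - x) with hc'
  set r' : ℝ → ℝ := fun t => (1 - t) * r + t * R with hr'
  have hc'cont : Continuous c' := continuous_const.add (continuous_id.smul continuous_const)
  have hr'cont : Continuous r' := by fun_prop
  have hdist1 : ∀ t : ℝ, 0 ≤ t → t ≤ 1 → dist (c' t) c = (1 - t) * dist x c := by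
    intro t ht0 ht1
    have heq : c' t - c = (1 - t) • (x - c) := by simp only [hc']; module
    rw [dist_eq_norm, heq, norm_smul, Real.norm_eq_abs, abs_of_nonneg (by linarith),
      ← dist_eq_norm]
  have hdist2 : ∀ t : ℝ, 0 ≤ t → t ≤ 1 → dist x (c' t) = t * dist x c := by
    intro t ht0 ht1
    have heq : x - c' t = t • (x - c) := by simp only [hc']; module
    rw [dist_eq_norm, heq, norm_smul, Real.norm_eq_abs, abs_of_nonneg ht0, ← dist_eq_norm]
  have hrR : r + dist x c ≤ R := by
    rw [hε] at hrε; linarith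
  have hsubset : ∀ t ∈ Icc (0:ℝ) 1, ball (c' t) (r' t) ⊆ ball c R := by
    rintro t ⟨ht0, ht1⟩ y hy
    rw [mem_ball] at hy ⊢
    have h1 : dist y c ≤ dist y (c' t) + dist (c' t) c := dist_triangle _ _ _
    rw [hdist1 t ht0 ht1] at h1
    simp only [hr'] at hy
    nlinarith
  have hmem : ∀ t ∈ Icc (0:ℝ) 1, x ∈ ball (c' t) (r' t) := by
    rintro t ⟨ht0, ht1⟩
    rw [mem_ball, hdist2 t ht0 ht1]
    show t * dist x c < (1 - t) * r + t * R
    rcases lt_or_eq_of_le ht1 with h | h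
    · have h1 : t * dist x c ≤ t * R := mul_le_mul_of_nonneg_left hx.le ht0
      have h2 : 0 < (1 - t) * r := mul_pos (by linarith) hrpos
      linarith
    · subst h; simpa using hx
  have hrpos' : ∀ t ∈ Icc (0:ℝ) 1, 0 < r' t := by
    rintro t ⟨ht0, ht1⟩
    show 0 < (1 - t) * r + t * R
    rcases lt_or_eq_of_le ht1 with h | h
    · have := mul_pos (by linarith : (0:ℝ) < 1 - t) hrpos
      nlinarith
    · subst h; simpa using hR
  -- the continuous function
  set S : Set (EuclideanSpace ℝ (Fin d)) := closedBall c R with hS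
  have hSfin : volume S < ⊤ := measure_closedBall_lt_top
  set f : ℝ → ℝ := fun t => (volume (E ∩ ball (c' t) (r' t))).toReal -
      (volume (S ∩ ball (c' t) (r' t))).toReal / 2 with hf
  have hfcont : Continuous f :=
    ((auxCont hd E hE hEfin hc'cont hr'cont).sub
      ((auxCont hd S measurableSet_closedBall hSfin hc'cont hr'cont).div_const 2))
  have hSint : ∀ t ∈ Icc (0:ℝ) 1, S ∩ ball (c' t) (r' t) = ball (c' t) (r' t) := by
    intro t ht
    exact inter_eq_self_of_subset_right ((hsubset t ht).trans ball_subset_closedBall)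
  have hc'0 : c' 0 = x := by simp [hc']
  have hr'0 : r' 0 = r := by show (1-0) * r + 0 * R = r; ring
  have hc'1 : c' 1 = c := by simp [hc']
  have hr'1 : r' 1 = R := by show (1-1) * r + 1 * R = R; ring
  have hfin1 : ∀ t, volume (E ∩ ball (c' t) (r' t)) ≠ ⊤ :=
    fun t => ((measure_mono inter_subset_left).trans_lt hEfin).ne
  have hfinB : ∀ t, volume (ball (c' t) (r' t)) ≠ ⊤ := fun t => measure_ball_lt_top.ne
  have htor : ∀ a : ℝ≥0∞, (a / 2).toReal = a.toReal / 2 := by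
    intro a; rw [ENNReal.toReal_div]; norm_num
  have hf0 : 0 < f 0 := by
    have h01 : (0:ℝ) ∈ Icc (0:ℝ) 1 := ⟨le_refl _, zero_le_one⟩
    have hfeq : f 0 = (volume (E ∩ ball x r)).toReal - (volume (ball x r)).toReal / 2 := by
      show (volume (E ∩ ball (c' 0) (r' 0))).toReal -
        (volume (S ∩ ball (c' 0) (r' 0))).toReal / 2 = _
      rw [hSint 0 h01, hc'0, hr'0]
    rw [hfeq, sub_pos, ← htor]
    exact ENNReal.toReal_strict_mono ((measure_mono inter_subset_left).trans_lt hEfin).ne hstrict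
  have hf1 : f 1 ≤ 0 := by
    have h11 : (1:ℝ) ∈ Icc (0:ℝ) 1 := ⟨zero_le_one, le_refl _⟩
    have hfeq : f 1 = (volume (E ∩ ball c R)).toReal - (volume (ball c R)).toReal / 2 := by
      show (volume (E ∩ ball (c' 1) (r' 1))).toReal -
        (volume (S ∩ ball (c' 1) (r' 1))).toReal / 2 = _
      rw [hSint 1 h11, hc'1, hr'1]
    rw [hfeq, sub_nonpos, ← htor]
    exact ENNReal.toReal_mono (by simp [ENNReal.div_eq_top, measure_ball_lt_top.ne]) hhalfB
  -- intermediate value theorem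
  have hivt := intermediate_value_Icc' (zero_le_one (α := ℝ)) hfcont.continuousOn
  have h0mem : (0:ℝ) ∈ Icc (f 1) (f 0) := ⟨hf1, hf0.le⟩
  obtain ⟨t₀, ht₀, hft₀⟩ := hivt h0mem
  refine ⟨c' t₀, r' t₀, hrpos' t₀ ht₀, hmem t₀ ht₀, hsubset t₀ ht₀, ?_⟩
  have hfeq : f t₀ = (volume (E ∩ ball (c' t₀) (r' t₀))).toReal -
      (volume (ball (c' t₀) (r' t₀))).toReal / 2 := by
    show (volume (E ∩ ball (c' t₀) (r' t₀))).toReal -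
      (volume (S ∩ ball (c' t₀) (r' t₀))).toReal / 2 = _
    rw [hSint t₀ ht₀]
  rw [hfeq] at hft₀
  have heq : (volume (E ∩ ball (c' t₀) (r' t₀))).toReal =
      (volume (ball (c' t₀) (r' t₀)) / 2).toReal := by
    rw [htor]; linarith
  rw [inter_comm]
  exact (ENNReal.toReal_eq_toReal_iff' (hfin1 t₀)
    (by simp [ENNReal.div_eq_top, (hfinB t₀)])).mp heq

/-- Boxing lemma for characteristic functions. Balls are encoded as
(center, radius) pairs. -/
theorem stmt3 (d : ℕ) (hd : 1 ≤ d) (E : Set (EuclideanSpace ℝ (Fin d)))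
    (hE : MeasurableSet E) (hEfin : volume E < ⊤)
    (ℬ : Set (EuclideanSpace ℝ (Fin d) × ℝ))
    (hpos : ∀ p ∈ ℬ, 0 < p.2)
    (hcover : E ⊆ ⋃ p ∈ ℬ, Metric.ball p.1 p.2)
    (hhalf : ∀ p ∈ ℬ, volume (E ∩ Metric.ball p.1 p.2) ≤ volume (Metric.ball p.1 p.2) / 2) :
    ∃ ℱ : Set (EuclideanSpace ℝ (Fin d) × ℝ),
      (∀ q ∈ ℱ, 0 < q.2 ∧
        volume (Metric.ball q.1 q.2 ∩ E) = volume (Metric.ball q.1 q.2) / 2 ∧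
        ∃ p ∈ ℬ, Metric.ball q.1 q.2 ⊆ Metric.ball p.1 p.2) ∧
      volume (E \ ⋃ q ∈ ℱ, Metric.ball q.1 q.2) = 0 := by
  classical
  set ℱ : Set (EuclideanSpace ℝ (Fin d) × ℝ) :=
    {q | 0 < q.2 ∧ volume (ball q.1 q.2 ∩ E) = volume (ball q.1 q.2) / 2 ∧
      ∃ p ∈ ℬ, ball q.1 q.2 ⊆ ball p.1 p.2} with hℱ
  refine ⟨ℱ, fun q hq => hq, ?_⟩
  set U := ⋃ q ∈ ℱ, ball q.1 q.2 with hU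
  have hUopen : IsOpen U := isOpen_biUnion fun _ _ => isOpen_ball
  have key : ∀ᵐ x ∂(volume.restrict E), x ∈ U := by
    filter_upwards [Besicovitch.ae_tendsto_measure_inter_div volume E, ae_restrict_mem hE]
      with x hx hxE
    obtain ⟨p, hp, hxp⟩ := mem_iUnion₂.mp (hcover hxE)
    obtain ⟨y, s, hs, hxy, hsub, heq⟩ :=
      exists_half_ball hd E hE hEfin x p.1 p.2 hxp (hhalf p hp) hx
    exact mem_biUnion (show ((y, s) : _ × ℝ) ∈ ℱ from ⟨hs, heq, p, hp, hsub⟩) hxy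
  have h0 : (volume.restrict E) Uᶜ = 0 := by
    rw [← compl_compl U] at key ⊢
    simpa using mem_ae_iff.mp (by simpa using key : U ∈ ae (volume.restrict E))
  rw [diff_eq, inter_comm, ← Measure.restrict_apply hUopen.measurableSet.compl]
  exact h0
end

section
/- Continuity argument for the boxing lemma: let B(x₀,r₀) ⊆ B(x₁,r₁) be balls in ℝ^d and E measurable with |E∩B(x₀,r₀)| ≥ |B(x₀,r₀)|/2 and |E∩B(x₁,r₁)| ≤ |B(x₁,r₁)|/2. Then there exists t ∈ [0,1] such that the ball B(x_t, r_t), with x_t = (1−t)x₀ + t x₁ and r_t = (1−t)r₀ + t r₁, satisfies |E ∩ B(x_t,r_t)| = |B(x_t,r_t)|/2. -/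
open MeasureTheory Metric Set Filter Topology
open scoped ENNReal

private lemma stmt4_measure_est {X : Type*} [MeasurableSpace X] (μ : Measure X)
    (E A B : Set X) (hB : μ B ≠ ∞) (hAB : μ (A \ B) ≠ ∞) :
    (μ (E ∩ A)).toReal ≤ (μ (E ∩ B)).toReal + (μ (A \ B)).toReal := by
  have h1 : μ (E ∩ A) ≤ μ (E ∩ B) + μ (A \ B) := by
    refine le_trans (measure_mono ?_) (measure_union_le _ _)
    intro x hx
    by_cases hxB : x ∈ B
    · exact Or.inl ⟨hx.1, hxB⟩
    · exact Or.inr ⟨hx.2, hxB⟩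
  have hEB : μ (E ∩ B) ≠ ∞ := fun h => hB (top_le_iff.mp (h ▸ measure_mono inter_subset_right))
  calc (μ (E ∩ A)).toReal ≤ (μ (E ∩ B) + μ (A \ B)).toReal :=
        ENNReal.toReal_mono (by finiteness) h1
    _ = (μ (E ∩ B)).toReal + (μ (A \ B)).toReal := ENNReal.toReal_add hEB hAB

/-- continuity argument for the boxing lemma. -/
theorem stmt4 (d : ℕ) (hd : 1 ≤ d) (E : Set (EuclideanSpace ℝ (Fin d)))
    (hE : MeasurableSet E)
    (x₀ x₁ : EuclideanSpace ℝ (Fin d)) (r₀ r₁ : ℝ) (hr₀ : 0 < r₀) (hr₁ : 0 < r₁)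
    (hsub : Metric.ball x₀ r₀ ⊆ Metric.ball x₁ r₁)
    (h₀ : volume (Metric.ball x₀ r₀) / 2 ≤ volume (E ∩ Metric.ball x₀ r₀))
    (h₁ : volume (E ∩ Metric.ball x₁ r₁) ≤ volume (Metric.ball x₁ r₁) / 2) :
    ∃ t ∈ Set.Icc (0 : ℝ) 1,
      volume (E ∩ Metric.ball ((1 - t) • x₀ + t • x₁) ((1 - t) * r₀ + t * r₁))
        = volume (Metric.ball ((1 - t) • x₀ + t • x₁) ((1 - t) * r₀ + t * r₁)) / 2 := by
  haveI : Nonempty (Fin d) := Fin.pos_iff_nonempty.mp hd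
  set c : ℝ → EuclideanSpace ℝ (Fin d) := fun t => (1 - t) • x₀ + t • x₁ with hc
  set ρ : ℝ → ℝ := fun t => (1 - t) * r₀ + t * r₁ with hρ
  have hcont_c : Continuous c := by fun_prop
  have hcont_ρ : Continuous ρ := by fun_prop
  set V : ℝ → ℝ := fun r => (volume (ball (0 : EuclideanSpace ℝ (Fin d)) r)).toReal with hV
  have hVball : ∀ (x : EuclideanSpace ℝ (Fin d)) (r : ℝ), (volume (ball x r)).toReal = V r := fun x r => by
    rw [hV, Measure.addHaar_ball_center]
  have hVcont : Continuous V := by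
    have : V = fun r => (max r 0) ^ Fintype.card (Fin d) *
        (ENNReal.ofReal (Real.sqrt Real.pi ^ Fintype.card (Fin d) /
          Real.Gamma (Fintype.card (Fin d) / 2 + 1))).toReal := by
      funext r
      show (volume (ball (0 : EuclideanSpace ℝ (Fin d)) r)).toReal = _
      rw [EuclideanSpace.volume_ball, ENNReal.toReal_mul, ENNReal.toReal_pow,
        ENNReal.toReal_ofReal']
    rw [this]
    fun_prop
  set φ : ℝ → ℝ := fun t => (volume (E ∩ ball (c t) (ρ t))).toReal with hφ
  have hballfin : ∀ (x : EuclideanSpace ℝ (Fin d)) (r : ℝ), volume (ball x r) ≠ ∞ := fun x r =>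
    (measure_ball_lt_top).ne
  have hfin : ∀ (x : EuclideanSpace ℝ (Fin d)) (r : ℝ), volume (E ∩ ball x r) ≠ ∞ := fun x r =>
    ((measure_mono inter_subset_right).trans_lt measure_ball_lt_top).ne
  -- the key annulus estimate
  set D : ℝ → ℝ → ℝ := fun t s => dist (c s) (c t) + |ρ s - ρ t| with hD
  have hDnonneg : ∀ t s, 0 ≤ D t s := fun t s => add_nonneg dist_nonneg (abs_nonneg _)
  have hkey : ∀ t s, |φ s - φ t| ≤ V (ρ t + D t s) - V (ρ t - D t s) := by
    intro t s
    have hsub_big : ∀ u v : ℝ, ball (c u) (ρ u) ⊆ ball (c t) (ρ t + D t u) := by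
      intro u v y hy
      simp only [mem_ball] at hy ⊢
      calc dist y (c t) ≤ dist y (c u) + dist (c u) (c t) := dist_triangle _ _ _
        _ < ρ u + dist (c u) (c t) := by linarith
        _ ≤ ρ t + |ρ u - ρ t| + dist (c u) (c t) := by
            have := le_abs_self (ρ u - ρ t); linarith
        _ = ρ t + D t u := by rw [hD]; ring
    have hsub_small : ∀ u : ℝ, ball (c t) (ρ t - D t u) ⊆ ball (c u) (ρ u) := by
      intro u y hy
      simp only [mem_ball] at hy ⊢
      have h1 : dist y (c u) ≤ dist y (c t) + dist (c t) (c u) := dist_triangle _ _ _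
      have h2 : dist (c t) (c u) = dist (c u) (c t) := dist_comm _ _
      have h3 : |ρ u - ρ t| ≥ ρ t - ρ u := by
        have := neg_le_abs (ρ u - ρ t); linarith
      simp only [hD] at hy
      linarith
    -- annulus
    set A : Set (EuclideanSpace ℝ (Fin d)) := ball (c t) (ρ t + D t s) \ ball (c t) (ρ t - D t s) with hA
    have hAmeas : (volume A).toReal = V (ρ t + D t s) - V (ρ t - D t s) := by
      rw [hA, measure_diff (ball_subset_ball (by have := hDnonneg t s; linarith))
        measurableSet_ball.nullMeasurableSet (hballfin _ _),
        ENNReal.toReal_sub_of_le (measure_mono (ball_subset_ball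
          (by have := hDnonneg t s; linarith))) (hballfin _ _), hVball, hVball]
    have hBsB : ball (c s) (ρ s) \ ball (c t) (ρ t) ⊆ A := by
      intro y hy
      exact ⟨hsub_big s s hy.1, fun hmem => hy.2 (ball_subset_ball (by
        have := hDnonneg t s; linarith) hmem)⟩
    have hBtB : ball (c t) (ρ t) \ ball (c s) (ρ s) ⊆ A := by
      intro y hy
      exact ⟨ball_subset_ball (by have := hDnonneg t s; linarith) hy.1,
        fun hmem => hy.2 (hsub_small s hmem)⟩
    have hAfin : volume A ≠ ∞ :=
      ((measure_mono diff_subset).trans_lt measure_ball_lt_top).ne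
    have e1 : φ s ≤ φ t + (volume A).toReal := by
      refine le_trans (stmt4_measure_est volume E _ _ (hballfin _ _)
        (((measure_mono hBsB).trans_lt hAfin.lt_top).ne)) ?_
      have := ENNReal.toReal_mono hAfin (measure_mono hBsB)
      simp only [hφ]; linarith
    have e2 : φ t ≤ φ s + (volume A).toReal := by
      refine le_trans (stmt4_measure_est volume E _ _ (hballfin _ _)
        (((measure_mono hBtB).trans_lt hAfin.lt_top).ne)) ?_
      have := ENNReal.toReal_mono hAfin (measure_mono hBtB)
      simp only [hφ]; linarith
    rw [abs_sub_le_iff, ← hAmeas]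
    constructor <;> linarith
  -- continuity of φ
  have hφcont : Continuous φ := by
    rw [continuous_iff_continuousAt]
    intro t
    have hDcont : Continuous (D t) := by
      simp only [hD]
      fun_prop
    have hDt : D t t = 0 := by simp [hD]
    have hψ : Tendsto (fun s => V (ρ t + D t s) - V (ρ t - D t s)) (𝓝 t) (𝓝 0) := by
      have h1 : Tendsto (fun s => V (ρ t + D t s) - V (ρ t - D t s)) (𝓝 t)
          (𝓝 (V (ρ t + D t t) - V (ρ t - D t t))) := by
        exact ((hVcont.comp (continuous_const.add hDcont)).sub
          (hVcont.comp (continuous_const.sub hDcont))).tendsto t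
      simpa [hDt] using h1
    rw [ContinuousAt, tendsto_iff_dist_tendsto_zero]
    refine squeeze_zero (fun s => dist_nonneg) (fun s => ?_) hψ
    rw [Real.dist_eq]
    exact hkey t s
  -- the IVT function
  set f : ℝ → ℝ := fun t => φ t - V (ρ t) / 2 with hf
  have hfcont : Continuous f := hφcont.sub ((hVcont.comp hcont_ρ).div_const 2)
  have htwo : ((2 : ℝ≥0∞)).toReal = 2 := rfl
  have hhalf : ∀ (x : EuclideanSpace ℝ (Fin d)) (r : ℝ), (volume (ball x r) / 2).toReal = V r / 2 := by
    intro x r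
    rw [ENNReal.toReal_div, htwo, hVball]
  have hf0 : 0 ≤ f 0 := by
    have h := ENNReal.toReal_mono (hfin x₀ r₀) h₀
    rw [hhalf] at h
    have hc0 : c 0 = x₀ := by simp [hc]
    have hρ0 : ρ 0 = r₀ := by simp [hρ]
    simp only [hf, hφ, hc0, hρ0]
    linarith
  have hf1 : f 1 ≤ 0 := by
    have h2 : volume (ball x₁ r₁) / 2 ≠ ∞ := (ENNReal.div_lt_top (hballfin _ _) two_ne_zero).ne
    have h := ENNReal.toReal_mono h2 h₁
    rw [hhalf] at h
    have hc1 : c 1 = x₁ := by simp [hc]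
    have hρ1 : ρ 1 = r₁ := by simp [hρ]
    simp only [hf, hφ, hc1, hρ1]
    linarith
  have hIVT : (0 : ℝ) ∈ f '' Set.Icc 0 1 := by
    apply intermediate_value_Icc' (by norm_num : (0:ℝ) ≤ 1) hfcont.continuousOn
    exact ⟨hf1, hf0⟩
  obtain ⟨t, ht, hft⟩ := hIVT
  refine ⟨t, ht, ?_⟩
  have h2 : volume (ball (c t) (ρ t)) / 2 ≠ ∞ := (ENNReal.div_lt_top (hballfin _ _) two_ne_zero).ne
  have heq : (volume (E ∩ ball (c t) (ρ t))).toReal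
      = (volume (ball (c t) (ρ t)) / 2).toReal := by
    rw [hhalf]
    simp only [hf, hφ] at hft
    linarith
  exact (ENNReal.toReal_eq_toReal_iff' (hfin _ _) h2).mp heq
end

section
/- Let λ ≤ 2^{-(d+1)/2} d^{-3/2} and let B, C be balls in ℝ^d with diam C ≥ diam B and |B ∩ C| ≤ λ|B|. Then the concentric rescaled ball (1 − 2 d^{3/(d+1)} λ^{2/(d+1)})·B is disjoint from C. -/
open MeasureTheory Metric Set Filter
open scoped ENNReal
open scoped RealInnerProductSpace

/-- cancel the unit-ball volume factor -/
lemma stmt16_cancel {d : ℕ} (V W : ℝ) (hW : 0 ≤ W)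
    (h : ENNReal.ofReal V * volume (Metric.ball (0 : EuclideanSpace ℝ (Fin d)) 1)
      ≤ ENNReal.ofReal W * volume (Metric.ball (0 : EuclideanSpace ℝ (Fin d)) 1)) :
    V ≤ W := by
  have h0 : volume (Metric.ball (0 : EuclideanSpace ℝ (Fin d)) 1) ≠ 0 :=
    (measure_ball_pos _ _ one_pos).ne'
  have h1 : volume (Metric.ball (0 : EuclideanSpace ℝ (Fin d)) 1) ≠ ⊤ :=
    measure_ball_lt_top.ne
  rw [ENNReal.mul_le_mul_iff_left h0 h1] at h
  exact (ENNReal.ofReal_le_ofReal_iff hW).1 h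

/-- inscribed ball in the intersection of two balls -/
lemma stmt16_inscribed {E : Type*} [NormedAddCommGroup E] [NormedSpace ℝ E]
    (x y : E) (r s ρ : ℝ) (hr : 0 < r) (hrs : r ≤ s) (hρ : 0 < ρ)
    (hρr : 2 * ρ ≤ r) (hρs : dist x y + 2 * ρ ≤ r + s) :
    ∃ p : E, Metric.ball p ρ ⊆ Metric.ball x r ∩ Metric.ball y s := by
  set t := dist x y with htdef
  have ht0 : 0 ≤ t := dist_nonneg
  rcases le_or_gt t (r - ρ) with hcase | hcase
  · refine ⟨x, fun z hz => ?_⟩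
    have hzx : dist z x < ρ := mem_ball.1 hz
    constructor
    · exact mem_ball.2 (lt_of_lt_of_le hzx (by linarith))
    · refine mem_ball.2 ?_
      calc dist z y ≤ dist z x + dist x y := dist_triangle z x y
        _ < ρ + (r - ρ) := by rw [← htdef]; linarith
        _ = r := by ring
        _ ≤ s := hrs
  · have htpos : 0 < t := by linarith
    refine ⟨x + ((r - ρ) / t) • (y - x), fun z hz => ?_⟩
    have hnyx : ‖y - x‖ = t := by rw [htdef, dist_comm, dist_eq_norm]
    have hpx : dist (x + ((r - ρ) / t) • (y - x)) x = r - ρ := by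
      rw [dist_eq_norm, add_sub_cancel_left, norm_smul, hnyx, Real.norm_eq_abs,
        abs_of_nonneg (div_nonneg (by linarith) htpos.le)]
      field_simp
    have hpy : dist (x + ((r - ρ) / t) • (y - x)) y = t - (r - ρ) := by
      have hxyeq : x + ((r - ρ) / t) • (y - x) - y = (((r - ρ) / t) - 1) • (y - x) := by
        rw [sub_smul, one_smul]; abel
      rw [dist_eq_norm, hxyeq, norm_smul, hnyx, Real.norm_eq_abs,
        abs_of_nonpos (by rw [sub_nonpos, div_le_one htpos]; linarith)]
      field_simp
      ring

    have hzp : dist z (x + ((r - ρ) / t) • (y - x)) < ρ := mem_ball.1 hz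
    constructor
    · refine mem_ball.2 ?_
      calc dist z x ≤ dist z (x + ((r - ρ) / t) • (y - x)) +
            dist (x + ((r - ρ) / t) • (y - x)) x := dist_triangle _ _ _
        _ < ρ + (r - ρ) := by rw [hpx]; linarith
        _ = r := by ring
    · refine mem_ball.2 ?_
      calc dist z y ≤ dist z (x + ((r - ρ) / t) • (y - x)) +
            dist (x + ((r - ρ) / t) • (y - x)) y := dist_triangle _ _ _
        _ < ρ + (t - (r - ρ)) := by rw [hpy]; linarith
        _ ≤ s := by linarith


set_option maxHeartbeats 1000000 in
/-- lower bound for the volume of a lens via an inscribed ellipsoid -/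
lemma stmt16_lens (d : ℕ) (hd : 2 ≤ d) (x y : EuclideanSpace ℝ (Fin d)) (r s δ : ℝ)
    (hr : 0 < r) (hrs : r ≤ s) (hδ0 : 0 < δ) (hδr : δ ≤ r)
    (hδ : dist x y + δ ≤ r + s) :
    ENNReal.ofReal ((δ / 5) * Real.sqrt (51 / 100 * (r * δ)) ^ (d - 1)) *
        volume (Metric.ball (0 : EuclideanSpace ℝ (Fin d)) 1)
      ≤ volume (Metric.ball x r ∩ Metric.ball y s) := by
  set t := dist x y with htdef
  have ht0 : 0 ≤ t := dist_nonneg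
  set α : ℝ := δ / 5 with hαdef
  set β : ℝ := Real.sqrt (51 / 100 * (r * δ)) with hβdef
  have hβpos : 0 < β := Real.sqrt_pos.2 (by positivity)
  have hαpos : 0 < α := by positivity
  have hβ2 : β ^ 2 = 51 / 100 * (r * δ) := Real.sq_sqrt (by positivity)
  set am : ℝ := r - δ / 2 with hamdef
  clear_value t α β am
  -- a unit vector in the direction of y - x
  have hex : ∃ u : EuclideanSpace ℝ (Fin d), ‖u‖ = 1 ∧ y - x = t • u := by
    rcases eq_or_lt_of_le ht0 with h0 | hpos
    · have hxy : y = x := by rw [← dist_eq_zero, dist_comm, ← htdef, ← h0]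
      refine ⟨EuclideanSpace.single (⟨0, by omega⟩ : Fin d) 1, ?_, ?_⟩
      · rw [EuclideanSpace.norm_single]; norm_num
      · rw [hxy, sub_self, ← h0, zero_smul]
    · refine ⟨t⁻¹ • (y - x), ?_, ?_⟩
      · rw [norm_smul, Real.norm_eq_abs, abs_of_nonneg (inv_nonneg.2 ht0),
          show ‖y - x‖ = t by rw [htdef, dist_comm, dist_eq_norm]]
        field_simp
      · rw [smul_smul, mul_inv_cancel₀ hpos.ne', one_smul]
  obtain ⟨u, hu, hyx⟩ := hex
  -- the linear map giving the ellipsoid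
  set L : EuclideanSpace ℝ (Fin d) →ₗ[ℝ] EuclideanSpace ℝ (Fin d) :=
    β • LinearMap.id + (α - β) • ((innerSL ℝ u).smulRight u).toLinearMap with hLdef
  have hL : ∀ v : EuclideanSpace ℝ (Fin d), L v = β • v + ((α - β) * ⟪u, v⟫) • u := by
    intro v
    simp [hLdef, mul_smul]
  -- orthonormal basis whose first vector is u
  have hcard : Module.finrank ℝ (EuclideanSpace ℝ (Fin d)) = Fintype.card (Fin d) := by
    simp [finrank_euclideanSpace_fin]
  set i₀ : Fin d := ⟨0, by omega⟩ with hi₀def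
  have hortho : Orthonormal ℝ (({i₀} : Set (Fin d)).restrict (fun _ => u)) := by
    constructor
    · intro i; exact hu
    · intro i j hij
      exact absurd (Subtype.ext (i.2.trans j.2.symm)) hij
  obtain ⟨b, hb⟩ := hortho.exists_orthonormalBasis_extension_of_card_eq hcard
  have hbi₀ : b i₀ = u := hb i₀ rfl
  -- determinant of L
  have hdet : LinearMap.det L = α * β ^ (d - 1) := by
    have hmat : LinearMap.toMatrix b.toBasis b.toBasis L
        = Matrix.diagonal (fun i => if i = i₀ then α else β) := by
      ext i j
      rw [LinearMap.toMatrix_apply, OrthonormalBasis.coe_toBasis, hL (b j)]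
      have huu : ⟪u, u⟫ = 1 := by
        rw [real_inner_self_eq_norm_mul_norm, hu]; norm_num
      by_cases hj : j = i₀
      · subst hj
        have hexpr : β • b i₀ + ((α - β) * ⟪u, b i₀⟫) • u = α • b i₀ := by
          rw [hbi₀, huu]
          module
        rw [hexpr, _root_.map_smul, ← OrthonormalBasis.coe_toBasis, Module.Basis.repr_self]
        by_cases hi : i = i₀
        · simp [Matrix.diagonal_apply, Finsupp.single_apply, hi]
        · simp [Matrix.diagonal_apply, Finsupp.single_apply, hi, Ne.symm hi]
      · have hin0 : ⟪u, b j⟫ = 0 := by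
          rw [real_inner_comm, ← hbi₀]
          have h := orthonormal_iff_ite.1 b.orthonormal j i₀
          rw [h, if_neg hj]
        have hexpr : β • b j + ((α - β) * ⟪u, b j⟫) • u = β • b j := by
          rw [hin0]; module
        rw [hexpr, _root_.map_smul, ← OrthonormalBasis.coe_toBasis, Module.Basis.repr_self]
        by_cases hi : i = j
        · simp [Matrix.diagonal_apply, Finsupp.single_apply, hi, hj]
        · simp [Matrix.diagonal_apply, Finsupp.single_apply, hi, hj, Ne.symm hi]
    rw [← LinearMap.det_toMatrix b.toBasis, hmat, Matrix.det_diagonal]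
    rw [← Finset.mul_prod_erase Finset.univ _ (Finset.mem_univ i₀), if_pos rfl]
    congr 1
    rw [Finset.prod_congr rfl (fun i hi => if_neg (Finset.ne_of_mem_erase hi)),
      Finset.prod_const, Finset.card_erase_of_mem (Finset.mem_univ i₀),
      Finset.card_univ, Fintype.card_fin]
  -- the ellipsoid image
  set p : EuclideanSpace ℝ (Fin d) := x + am • u with hpdef
  clear_value p
  have htub : t ≤ r + s - δ := by rw [htdef]; linarith
  have hsub : (fun v => p + L v) '' Metric.ball 0 1
      ⊆ Metric.ball x r ∩ Metric.ball y s := by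
    rintro z ⟨v, hv, rfl⟩
    have hv1 : ‖v‖ < 1 := by rwa [mem_ball, dist_zero_right] at hv
    set c : ℝ := ⟪u, v⟫ with hcdef
    have hc : |c| ≤ ‖v‖ := by
      have h := abs_real_inner_le_norm u v
      rwa [hu, one_mul] at h
    have hc1 : |c| < 1 := lt_of_le_of_lt hc hv1
    set w : EuclideanSpace ℝ (Fin d) := v - c • u with hwdef
    clear_value c w
    have huu : ⟪u, u⟫ = 1 := by
      rw [real_inner_self_eq_norm_mul_norm, hu]; norm_num
    have hwu : ⟪u, w⟫ = 0 := by
      rw [hwdef, inner_sub_right, real_inner_smul_right, huu, hcdef]; ring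
    have hvu : ⟪v, u⟫ = c := by rw [hcdef, real_inner_comm]
    have hw2 : ‖w‖ ^ 2 = ‖v‖ ^ 2 - c ^ 2 := by
      rw [hwdef, norm_sub_sq_real, real_inner_smul_right, hvu, norm_smul, hu,
        Real.norm_eq_abs]
      rw [mul_one, sq_abs]; ring
    have hnormform : ∀ γ : ℝ, ‖γ • u + β • w‖ ^ 2 = γ ^ 2 + β ^ 2 * ‖w‖ ^ 2 := by
      intro γ
      rw [norm_add_sq_real, real_inner_smul_left, real_inner_smul_right, hwu,
        norm_smul, norm_smul, hu, Real.norm_eq_abs, Real.norm_eq_abs]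
      rw [mul_one, mul_pow, sq_abs, sq_abs]; ring
    have hzx : p + L v - x = (am + α * c) • u + β • w := by
      rw [hpdef, hL v, ← hcdef, hwdef]
      module
    have hy' : x + t • u = y := by rw [← hyx]; abel
    have hzy : p + L v - y = (am + α * c - t) • u + β • w := by
      rw [hpdef, hL v, ← hcdef, hwdef, ← hy']
      module
    have hαc1 : α * c ≤ α * |c| := mul_le_mul_of_nonneg_left (le_abs_self c) hαpos.le
    have hαc2 : -(α * |c|) ≤ α * c := by nlinarith [neg_abs_le c]
    have hαcabs : α * |c| < α := by
      nlinarith [mul_pos hαpos (show (0:ℝ) < 1 - |c| by linarith)]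
    have hA0 : 0 < am + α * c := by linarith
    have hA1 : am + α * c < r - 3 / 10 * δ := by linarith
    have hA2 : -(r - 3 / 10 * δ) < am + α * c := by linarith
    have hw1 : ‖w‖ ^ 2 ≤ 1 := by
      rw [hw2]
      nlinarith [sq_nonneg c, norm_nonneg v]
    have hwb : β ^ 2 * ‖w‖ ^ 2 ≤ β ^ 2 := by nlinarith [sq_nonneg β]
    constructor
    · rw [mem_ball, dist_eq_norm]
      have h2 : ‖p + L v - x‖ ^ 2 < r ^ 2 := by
        rw [hzx, hnormform]
        have hsq : (am + α * c) ^ 2 < (r - 3 / 10 * δ) ^ 2 := sq_lt_sq' hA2 hA1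
        have hfin : (r - 3 / 10 * δ) ^ 2 + β ^ 2 ≤ r ^ 2 := by
          rw [hβ2]
          nlinarith [mul_nonneg hδ0.le (sub_nonneg.2 hδr)]
        linarith
      exact lt_of_pow_lt_pow_left₀ 2 hr.le h2
    · rw [mem_ball, dist_eq_norm]
      have hB1 : am + α * c - t < s - 3 / 10 * δ := by linarith
      have hB2 : -(s - 3 / 10 * δ) < am + α * c - t := by linarith
      have h2 : ‖p + L v - y‖ ^ 2 < s ^ 2 := by
        rw [hzy, hnormform]
        have hsq : (am + α * c - t) ^ 2 < (s - 3 / 10 * δ) ^ 2 := sq_lt_sq' hB2 hB1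
        have hfin : (s - 3 / 10 * δ) ^ 2 + β ^ 2 ≤ s ^ 2 := by
          rw [hβ2]
          nlinarith [mul_nonneg hδ0.le (sub_nonneg.2 hδr),
            mul_nonneg hδ0.le (sub_nonneg.2 hrs)]
        linarith
      exact lt_of_pow_lt_pow_left₀ 2 (by linarith : (0:ℝ) ≤ s) h2
  have him : volume ((fun v => p + L v) '' Metric.ball 0 1)
      = ENNReal.ofReal (α * β ^ (d - 1)) * volume (Metric.ball (0 : EuclideanSpace ℝ (Fin d)) 1) := by
    have h1 : (fun v => p + L v) '' Metric.ball 0 1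
        = (fun w => p + w) '' (⇑L '' Metric.ball 0 1) := by
      rw [Set.image_image]
    rw [h1, Set.image_add_left, measure_preimage_add, Measure.addHaar_image_linearMap,
      hdet, abs_of_nonneg (by positivity)]
  calc ENNReal.ofReal (α * β ^ (d - 1)) * volume (Metric.ball (0 : EuclideanSpace ℝ (Fin d)) 1)
      = volume ((fun v => p + L v) '' Metric.ball 0 1) := him.symm
    _ ≤ volume (Metric.ball x r ∩ Metric.ball y s) := measure_mono hsub

set_option maxHeartbeats 1000000 in
/-- if two balls overlap in small volume, slightly shrinking the smaller
one (concentrically) makes them disjoint. -/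
theorem stmt16 (d : ℕ) (hd : 1 ≤ d) (lam : ℝ) (hlam0 : 0 < lam)
    (hlam : lam ≤ 2 ^ (-((d : ℝ) + 1) / 2) * (d : ℝ) ^ (-(3 : ℝ) / 2))
    (x y : EuclideanSpace ℝ (Fin d)) (r s : ℝ) (hr : 0 < r) (hs : 0 < s)
    (hdiam : r ≤ s)
    (hvol : volume (Metric.ball x r ∩ Metric.ball y s)
      ≤ ENNReal.ofReal lam * volume (Metric.ball x r)) :
    Disjoint
      (Metric.ball x ((1 - 2 * (d : ℝ) ^ ((3 : ℝ) / ((d : ℝ) + 1)) *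
        lam ^ ((2 : ℝ) / ((d : ℝ) + 1))) * r))
      (Metric.ball y s) := by
  have hdpos : (0:ℝ) < d := by exact_mod_cast hd
  haveI : Nonempty (Fin d) := ⟨⟨0, by omega⟩⟩
  haveI : Nontrivial (EuclideanSpace ℝ (Fin d)) := inferInstance
  set ε : ℝ := 2 * (d : ℝ) ^ ((3 : ℝ) / ((d : ℝ) + 1)) *
    lam ^ ((2 : ℝ) / ((d : ℝ) + 1)) with hεdef
  have hεpos : 0 < ε := by
    have h1 : 0 < (d:ℝ) ^ ((3:ℝ)/((d:ℝ)+1)) := Real.rpow_pos_of_pos hdpos _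
    have h2 : 0 < lam ^ ((2:ℝ)/((d:ℝ)+1)) := Real.rpow_pos_of_pos hlam0 _
    rw [hεdef]; positivity
  rcases le_or_gt (1 - ε) 0 with hcase | hcase
  · have hneg : (1 - ε) * r ≤ 0 := mul_nonpos_of_nonpos_of_nonneg hcase hr.le
    rw [Metric.ball_eq_empty.2 hneg]
    exact Set.empty_disjoint _
  · by_contra hcon
    rw [Set.not_disjoint_iff] at hcon
    obtain ⟨z, hz1, hz2⟩ := hcon
    have hzx : dist z x < (1 - ε) * r := mem_ball.1 hz1
    have hzy : dist z y < s := mem_ball.1 hz2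
    have ht : dist x y < (1 - ε) * r + s := by
      calc dist x y ≤ dist x z + dist z y := dist_triangle _ _ _
        _ = dist z x + dist z y := by rw [dist_comm x z]
        _ < (1 - ε) * r + s := by linarith
    set δ' : ℝ := min (r + s - dist x y) r with hδ'def
    have hexp : (1 - ε) * r = r - ε * r := by ring
    have h3 : ε * r < r + s - dist x y := by rw [hexp] at ht; linarith
    have hεr : 0 < ε * r := mul_pos hεpos hr
    have hεr1 : ε * r < r := by nlinarith
    have hδ'1 : ε * r < δ' := lt_min h3 hεr1
    have hδ'0 : 0 < δ' := lt_trans hεr hδ'1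
    have hδ'r : δ' ≤ r := min_le_right _ _
    have hδ'dist : dist x y + δ' ≤ r + s := by
      have h4 : δ' ≤ r + s - dist x y := min_le_left _ _
      linarith
    -- the upper volume bound
    have hballvol : volume (Metric.ball x r)
        = ENNReal.ofReal (r ^ d) * volume (Metric.ball (0 : EuclideanSpace ℝ (Fin d)) 1) := by
      rw [Measure.addHaar_ball volume x hr.le, finrank_euclideanSpace_fin]
    have hupper : volume (Metric.ball x r ∩ Metric.ball y s)
        ≤ ENNReal.ofReal (lam * r ^ d) *
          volume (Metric.ball (0 : EuclideanSpace ℝ (Fin d)) 1) := by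
      calc volume (Metric.ball x r ∩ Metric.ball y s)
          ≤ ENNReal.ofReal lam * volume (Metric.ball x r) := hvol
        _ = ENNReal.ofReal (lam * r ^ d) *
            volume (Metric.ball (0 : EuclideanSpace ℝ (Fin d)) 1) := by
            rw [hballvol, ← mul_assoc, ← ENNReal.ofReal_mul hlam0.le]
    rcases Nat.lt_or_ge d 2 with hd2 | hd2
    · -- case d = 1
      have hd1 : d = 1 := by omega
      subst hd1
      have hεeq : ε = 2 * lam := by
        rw [hεdef]
        norm_num
      obtain ⟨p, hp⟩ := stmt16_inscribed x y r s (δ' / 2) hr hdiam (by linarith)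
        (by linarith) (by linarith)
      have hpvol : volume (Metric.ball p (δ' / 2))
          = ENNReal.ofReal ((δ' / 2) ^ 1) *
            volume (Metric.ball (0 : EuclideanSpace ℝ (Fin 1)) 1) := by
        rw [Measure.addHaar_ball volume p (by linarith), finrank_euclideanSpace_fin]
      have hle := stmt16_cancel ((δ' / 2) ^ 1) (lam * r ^ 1) (by positivity)
        (by rw [← hpvol]; exact le_trans (measure_mono hp) hupper)
      rw [hεeq] at hδ'1
      simp only [pow_one] at hle
      linarith
    · -- case d ≥ 2
      set β : ℝ := Real.sqrt (51 / 100 * (r * δ')) with hβdef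
      have hβpos : 0 < β := Real.sqrt_pos.2 (by positivity)
      have hβ2 : β ^ 2 = 51 / 100 * (r * δ') := Real.sq_sqrt (by positivity)
      have hlens := stmt16_lens d hd2 x y r s δ' hr hdiam hδ'0 hδ'r hδ'dist
      rw [← hβdef] at hlens
      have hle := stmt16_cancel (δ' / 5 * β ^ (d - 1)) (lam * r ^ d) (by positivity)
        (le_trans hlens hupper)
      -- rpow computation
      have hd1ne : ((d:ℝ) + 1) ≠ 0 := by positivity
      have hX : ((d:ℝ) ^ ((3:ℝ)/((d:ℝ)+1))) ^ (d+1) = (d:ℝ) ^ (3:ℕ) := by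
        rw [← Real.rpow_natCast ((d:ℝ) ^ ((3:ℝ)/((d:ℝ)+1))) (d+1),
          ← Real.rpow_mul hdpos.le,
          show (3:ℝ)/((d:ℝ)+1) * (((d:ℕ)+1 : ℕ) : ℝ) = ((3:ℕ):ℝ) by
            push_cast; field_simp,
          Real.rpow_natCast]
      have hY : (lam ^ ((2:ℝ)/((d:ℝ)+1))) ^ (d+1) = lam ^ (2:ℕ) := by
        rw [← Real.rpow_natCast (lam ^ ((2:ℝ)/((d:ℝ)+1))) (d+1),
          ← Real.rpow_mul hlam0.le,
          show (2:ℝ)/((d:ℝ)+1) * (((d:ℕ)+1 : ℕ) : ℝ) = ((2:ℕ):ℝ) by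
            push_cast; field_simp,
          Real.rpow_natCast]
      have hεpow : ε ^ (d+1) = 2 ^ (d+1) * (d:ℝ) ^ (3:ℕ) * lam ^ (2:ℕ) := by
        rw [hεdef, mul_pow, mul_pow, hX, hY]
      obtain ⟨k, hk⟩ : ∃ k, d = k + 2 := ⟨d - 2, by omega⟩
      subst hk
      have hek : ε ^ (k+3) = 2 ^ (k+3) * ((k:ℝ)+2) ^ (3:ℕ) * lam ^ (2:ℕ) := by
        have e1 : k + 2 + 1 = k + 3 := by omega
        rw [e1] at hεpow
        rw [hεpow]
        push_cast
        ring
      have hle' : δ' / 5 * β ^ (k+1) ≤ lam * r ^ (k+2) := by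
        have e2 : k + 2 - 1 = k + 1 := by omega
        rwa [e2] at hle
      -- numeric contradiction via squares
      have h2Q : ε * r ^ 2 ≤ 2 * β ^ 2 := by
        rw [hβ2]
        nlinarith [mul_le_mul_of_nonneg_left hδ'1.le hr.le]
      have hC : (0:ℝ) < 25 * 2 ^ (k+1) := by positivity
      have hstep1 : (lam * r ^ (k+2)) ^ 2 * (25 * 2 ^ (k+1))
          ≤ (ε * r) ^ 2 * (ε * r ^ 2) ^ (k+1) := by
        have e : (ε * r) ^ 2 * (ε * r ^ 2) ^ (k+1) = ε ^ (k+3) * r ^ (2*k+4) := by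
          ring
        rw [e, hek]
        have e2 : (lam * r ^ (k+2)) ^ 2 = lam ^ 2 * r ^ (2*k+4) := by ring
        have e3 : (2:ℝ) ^ (k+3) = 4 * 2 ^ (k+1) := by ring
        rw [e2, e3]
        have hk0 : (0:ℝ) ≤ (k:ℝ) := Nat.cast_nonneg k
        have h25 : (25:ℝ) ≤ 4 * ((k:ℝ)+2) ^ (3:ℕ) := by
          have h8 : (2:ℝ) ^ (3:ℕ) ≤ ((k:ℝ)+2) ^ (3:ℕ) :=
            pow_le_pow_left₀ (by norm_num) (by linarith) 3
          norm_num at h8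
          linarith
        have hXpos : (0:ℝ) ≤ lam ^ 2 * r ^ (2*k+4) * 2 ^ (k+1) := by positivity
        nlinarith [mul_le_mul_of_nonneg_left h25 hXpos]
      have hstep2 : (ε * r) ^ 2 * (ε * r ^ 2) ^ (k+1)
          < δ' ^ 2 * (2 * β ^ 2) ^ (k+1) := by
        have h1 : (ε * r) ^ 2 < δ' ^ 2 := by nlinarith
        have h2 : (ε * r ^ 2) ^ (k+1) ≤ (2 * β ^ 2) ^ (k+1) :=
          pow_le_pow_left₀ (by positivity) h2Q _
        have h3 : (0:ℝ) < (ε * r ^ 2) ^ (k+1) := by positivity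
        calc (ε * r) ^ 2 * (ε * r ^ 2) ^ (k+1)
            < δ' ^ 2 * (ε * r ^ 2) ^ (k+1) := by
              exact mul_lt_mul_of_pos_right h1 h3
          _ ≤ δ' ^ 2 * (2 * β ^ 2) ^ (k+1) := by
              exact mul_le_mul_of_nonneg_left h2 (by positivity)
      have hstep3 : δ' ^ 2 * (2 * β ^ 2) ^ (k+1)
          = (δ' / 5 * β ^ (k+1)) ^ 2 * (25 * 2 ^ (k+1)) := by ring
      have hfinal : (lam * r ^ (k+2)) ^ 2 < (δ' / 5 * β ^ (k+1)) ^ 2 := by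
        have h := lt_of_le_of_lt hstep1 hstep2
        rw [hstep3] at h
        exact lt_of_mul_lt_mul_right h hC.le
      have hmain : lam * r ^ (k+2) < δ' / 5 * β ^ (k+1) :=
        lt_of_pow_lt_pow_left₀ 2 (by positivity) hfinal
      linarith
end

section
/- Let B ⊂ ℝ^d be a ball of radius r ≤ 1/2 centered at x_B with |x_B| ≤ 1 − r/2, and let y ∈ ∂B with |y| ≥ 1. Then the angle between y and y − x_B is at most π/3. -/
open MeasureTheory Metric Set Filter InnerProductGeometry
open scoped ENNReal
open scoped RealInnerProductSpace

/-- for a ball `B(x_B, r)` with `r ≤ 1/2`, `|x_B| ≤ 1 - r/2`, and a point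
`y ∈ ∂B` with `|y| ≥ 1`, the angle between `y` and `y - x_B` is at most `π/3`. -/
theorem stmt19 (d : ℕ) (hd : 1 ≤ d) (xB y : EuclideanSpace ℝ (Fin d)) (r : ℝ)
    (hr0 : 0 < r) (hr : r ≤ 1 / 2) (hxB : ‖xB‖ ≤ 1 - r / 2)
    (hy : y ∈ Metric.sphere xB r) (hy1 : 1 ≤ ‖y‖) :
    InnerProductGeometry.angle y (y - xB) ≤ Real.pi / 3 := by
  have hdist : ‖y - xB‖ = r := by
    rwa [mem_sphere_iff_norm] at hy
  have hsq : ‖y - xB‖ ^ 2 = ‖y‖ ^ 2 - 2 * ⟪y, xB⟫ + ‖xB‖ ^ 2 := norm_sub_sq_real y xB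
  have hinner : ⟪y, y - xB⟫ = ‖y‖ ^ 2 - ⟪y, xB⟫ := by
    rw [inner_sub_right, real_inner_self_eq_norm_sq]
  have hxB0 : 0 ≤ ‖xB‖ := norm_nonneg xB
  have hypos : (0:ℝ) < ‖y‖ := lt_of_lt_of_le one_pos hy1
  have hkey : ‖y‖ * ‖y - xB‖ * (1 / 2) ≤ ⟪y, y - xB⟫ := by
    rw [hinner, hdist]
    nlinarith [sq_nonneg r, mul_nonneg (sub_nonneg.2 hy1) (by linarith : 0 ≤ ‖y‖ + 1 - r)]
  have hden : (0:ℝ) < ‖y‖ * ‖y - xB‖ := by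
    rw [hdist]; positivity
  have hratio : (1:ℝ)/2 ≤ ⟪y, y - xB⟫ / (‖y‖ * ‖y - xB‖) := by
    rw [le_div_iff₀ hden]; linarith [hkey]
  rw [InnerProductGeometry.angle]
  have h3 : Real.pi / 3 = Real.arccos (1/2) := by
    rw [← Real.cos_pi_div_three, Real.arccos_cos (by positivity)
      (by linarith [Real.pi_pos])]
  rw [h3, Real.arccos, Real.arccos]
  have := Real.monotone_arcsin hratio
  linarith
end
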